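/- Let F be the ROBF map. If F has a fixed point μ* with all entries positive, then μ* is the unique fixed point of F, and for every initial vector μ⁰ with all entries positive, the iterates defined by μ^{t+1} = F(μ^t) converge to μ* as t → ∞. -/

import Mathlib

open Finset Filter

lemma frac_mono' {x y : ℝ} (hx : 0 ≤ x) (hxy : x ≤ y) : x/(1+x) ≤ y/(1+y) := by
  have h1 : (0:ℝ) < 1 + x := by linarith
  have h2 : (0:ℝ) < 1 + y := by linarith
  rw [div_le_div_iff₀ h1 h2]; nlinarith

section
variable (N K Nt : ℕ)
    (σ : Fin N → Fin N → Fin K → ℝ) (hσ : ∀ i n k, 0 < σ i n k)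
    (mbar : (Fin N → Fin K → ℝ) → Fin N → ℝ)
    (hmbar : ∀ μ : Fin N → Fin K → ℝ, (∀ n k, 0 ≤ μ n k) → ∀ i : Fin N,
      0 < mbar μ i ∧
      1 / mbar μ i =
        (1 / (Nt : ℝ)) * ∑ n, ∑ k, σ i n k * μ n k / (1 + σ i n k * μ n k * mbar μ i) + 1)

noncomputable def Psi (μ : Fin N → Fin K → ℝ) (i : Fin N) (m : ℝ) : ℝ :=
  (1/(Nt:ℝ)) * (∑ n, ∑ k, (σ i n k * μ n k * m) / (1 + σ i n k * μ n k * m)) + m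

include hσ hmbar in
lemma Psi_fix (μ : Fin N → Fin K → ℝ) (hμ : ∀ n k, 0 ≤ μ n k) (i : Fin N) :
    Psi N K Nt σ μ i (mbar μ i) = 1 := by
  obtain ⟨hm, heq⟩ := hmbar μ hμ i
  have hsum : (∑ n, ∑ k, σ i n k * μ n k / (1 + σ i n k * μ n k * mbar μ i)) * mbar μ i
      = ∑ n, ∑ k, σ i n k * μ n k * mbar μ i / (1 + σ i n k * μ n k * mbar μ i) := by
    rw [Finset.sum_mul]
    refine Finset.sum_congr rfl fun n _ => ?_
    rw [Finset.sum_mul]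
    exact Finset.sum_congr rfl fun k _ => by ring
  have : Psi N K Nt σ μ i (mbar μ i)
      = ((1/(Nt:ℝ)) * ∑ n, ∑ k, σ i n k * μ n k / (1 + σ i n k * μ n k * mbar μ i) + 1)
        * mbar μ i := by
    rw [add_mul, one_mul, mul_assoc, hsum]; rfl
  rw [this, ← heq, one_div, inv_mul_cancel₀ hm.ne']

include hσ in
lemma Psi_gap (μ : Fin N → Fin K → ℝ) (hμ : ∀ n k, 0 ≤ μ n k) (i : Fin N)
    {m m' : ℝ} (hm : 0 ≤ m) (hmm : m ≤ m') :
    Psi N K Nt σ μ i m + (m' - m) ≤ Psi N K Nt σ μ i m' := by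
  have hsum : (∑ n, ∑ k, (σ i n k * μ n k * m) / (1 + σ i n k * μ n k * m))
      ≤ ∑ n, ∑ k, (σ i n k * μ n k * m') / (1 + σ i n k * μ n k * m') := by
    refine Finset.sum_le_sum fun n _ => Finset.sum_le_sum fun k _ => ?_
    have ha : 0 ≤ σ i n k * μ n k := mul_nonneg (hσ i n k).le (hμ n k)
    exact frac_mono' (mul_nonneg ha hm) (by nlinarith)
  have h0 : (0:ℝ) ≤ 1/(Nt:ℝ) := by positivity
  have := mul_le_mul_of_nonneg_left hsum h0
  simp only [Psi]; linarith

include hσ in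
lemma Psi_mono_mu (μ μ' : Fin N → Fin K → ℝ) (hμ : ∀ n k, 0 ≤ μ n k)
    (hle : ∀ n k, μ n k ≤ μ' n k) (i : Fin N) {m : ℝ} (hm : 0 ≤ m) :
    Psi N K Nt σ μ i m ≤ Psi N K Nt σ μ' i m := by
  have hsum : (∑ n, ∑ k, (σ i n k * μ n k * m) / (1 + σ i n k * μ n k * m))
      ≤ ∑ n, ∑ k, (σ i n k * μ' n k * m) / (1 + σ i n k * μ' n k * m) := by
    refine Finset.sum_le_sum fun n _ => Finset.sum_le_sum fun k _ => ?_
    have ha : 0 ≤ σ i n k * μ n k := mul_nonneg (hσ i n k).le (hμ n k)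
    refine frac_mono' (mul_nonneg ha hm) ?_
    exact mul_le_mul_of_nonneg_right (mul_le_mul_of_nonneg_left (hle n k) (hσ i n k).le) hm
  have h0 : (0:ℝ) ≤ 1/(Nt:ℝ) := by positivity
  have := mul_le_mul_of_nonneg_left hsum h0
  simp only [Psi]; linarith

include hσ hmbar in
lemma mbar_ge (μ : Fin N → Fin K → ℝ) (hμ : ∀ n k, 0 ≤ μ n k) (i : Fin N)
    {m : ℝ} (hm : 0 ≤ m) (h : Psi N K Nt σ μ i m ≤ 1) : m ≤ mbar μ i := by
  by_contra hc
  push_neg at hc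
  have hfix := Psi_fix N K Nt σ hσ mbar hmbar μ hμ i
  have hmb : 0 ≤ mbar μ i := (hmbar μ hμ i).1.le
  have := Psi_gap N K Nt σ hσ μ hμ i hmb hc.le
  rw [hfix] at this
  linarith

include hσ hmbar in
lemma mbar_le (μ : Fin N → Fin K → ℝ) (hμ : ∀ n k, 0 ≤ μ n k) (i : Fin N)
    {m : ℝ} (hm : 0 ≤ m) (h : 1 ≤ Psi N K Nt σ μ i m) : mbar μ i ≤ m := by
  by_contra hc
  push_neg at hc
  have hfix := Psi_fix N K Nt σ hσ mbar hmbar μ hμ i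
  have := Psi_gap N K Nt σ hσ μ hμ i hm hc.le
  rw [hfix] at this
  linarith

include hσ hmbar in
lemma mbar_mono (μ μ' : Fin N → Fin K → ℝ) (hμ : ∀ n k, 0 ≤ μ n k)
    (hle : ∀ n k, μ n k ≤ μ' n k) (i : Fin N) : mbar μ' i ≤ mbar μ i := by
  have hμ' : ∀ n k, 0 ≤ μ' n k := fun n k => le_trans (hμ n k) (hle n k)
  have hmb : 0 ≤ mbar μ i := (hmbar μ hμ i).1.le
  refine mbar_le N K Nt σ hσ mbar hmbar μ' hμ' i hmb ?_
  rw [← Psi_fix N K Nt σ hσ mbar hmbar μ hμ i]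
  exact Psi_mono_mu N K Nt σ hσ μ μ' hμ hle i hmb

include hσ hmbar in
lemma mbar_le_one (μ : Fin N → Fin K → ℝ) (hμ : ∀ n k, 0 ≤ μ n k) (i : Fin N) :
    mbar μ i ≤ 1 := by
  obtain ⟨hm, heq⟩ := hmbar μ hμ i
  have hs : 0 ≤ (1/(Nt:ℝ)) * ∑ n, ∑ k, σ i n k * μ n k / (1 + σ i n k * μ n k * mbar μ i) := by
    apply mul_nonneg (by positivity)
    refine Finset.sum_nonneg fun n _ => Finset.sum_nonneg fun k _ => ?_
    have ha : 0 ≤ σ i n k * μ n k := mul_nonneg (hσ i n k).le (hμ n k)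
    apply div_nonneg ha
    nlinarith
  have h1 : 1 ≤ 1 / mbar μ i := by rw [heq]; linarith
  rw [le_div_iff₀ hm] at h1
  linarith


lemma frac_up' {r s : ℝ} (hr : 1 ≤ r) (hs : 0 ≤ s) : (r*s)/(1+r*s) ≤ r*(s/(1+s)) := by
  have h1 : (0:ℝ) < 1 + s := by linarith
  have hrs : 0 ≤ r*s := mul_nonneg (by linarith) hs
  have h2 : (0:ℝ) < 1 + r*s := by linarith
  have key : (r*s)/(1+r*s) ≤ (r*s)/(1+s) := by
    apply div_le_div_of_nonneg_left hrs h1; nlinarith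
  calc (r*s)/(1+r*s) ≤ (r*s)/(1+s) := key
  _ = r*(s/(1+s)) := (mul_div_assoc r s (1+s))

lemma frac_down' {r s : ℝ} (hr0 : 0 < r) (hr : r ≤ 1) (hs : 0 ≤ s) : r*(s/(1+s)) ≤ (r*s)/(1+r*s) := by
  have h1 : (0:ℝ) < 1 + s := by linarith
  have hrs : 0 ≤ r*s := mul_nonneg hr0.le hs
  have h2 : (0:ℝ) < 1 + r*s := by linarith
  have key : (r*s)/(1+s) ≤ (r*s)/(1+r*s) := by
    apply div_le_div_of_nonneg_left hrs h2; nlinarith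
  calc r*(s/(1+s)) = (r*s)/(1+s) := (mul_div_assoc r s (1+s)).symm
  _ ≤ (r*s)/(1+r*s) := key

include hσ hmbar in
lemma mbar_scale_up (μs : Fin N → Fin K → ℝ) (hμs : ∀ n k, 0 ≤ μs n k) (i : Fin N)
    {α c : ℝ} (hα : 1 ≤ α) (hc : 0 < c) (hc1 : c ≤ 1) (hcm : c ≤ mbar μs i) :
    mbar μs i / ((1-c)*α + c) ≤ mbar (fun n k => α * μs n k) i := by
  set m := mbar μs i with hmdef
  set β := (1-c)*α + c with hβdef
  have hm : 0 < m := (hmbar μs hμs i).1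
  have hm1 : m ≤ 1 := mbar_le_one N K Nt σ hσ mbar hmbar μs hμs i
  have hβ1 : 1 ≤ β := by nlinarith
  have hβ0 : 0 < β := by linarith
  have hβα : β ≤ α := by nlinarith
  have hr : 1 ≤ α/β := (one_le_div hβ0).mpr hβα
  have hμα : ∀ n k, 0 ≤ α * μs n k := fun n k => mul_nonneg (by linarith) (hμs n k)
  refine mbar_ge N K Nt σ hσ mbar hmbar _ hμα i (by positivity) ?_
  have hterm : ∀ n : Fin N, ∀ k : Fin K,
      (σ i n k * (α * μs n k) * (m/β)) / (1 + σ i n k * (α * μs n k) * (m/β))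
        ≤ (α/β) * ((σ i n k * μs n k * m)/(1 + σ i n k * μs n k * m)) := by
    intro n k
    have hs : 0 ≤ σ i n k * μs n k * m :=
      mul_nonneg (mul_nonneg (hσ i n k).le (hμs n k)) hm.le
    have hrw : σ i n k * (α * μs n k) * (m/β) = (α/β) * (σ i n k * μs n k * m) := by
      field_simp
    rw [hrw]
    exact frac_up' hr hs
  have hsum : (∑ n, ∑ k, (σ i n k * (α * μs n k) * (m/β)) / (1 + σ i n k * (α * μs n k) * (m/β)))
      ≤ (α/β) * ∑ n, ∑ k, (σ i n k * μs n k * m)/(1 + σ i n k * μs n k * m) := by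
    rw [Finset.mul_sum]
    refine Finset.sum_le_sum fun n _ => ?_
    rw [Finset.mul_sum]
    exact Finset.sum_le_sum fun k _ => hterm n k
  have hfix := Psi_fix N K Nt σ hσ mbar hmbar μs hμs i
  simp only [Psi] at hfix ⊢
  have h0 : (0:ℝ) ≤ 1/(Nt:ℝ) := by positivity
  have h2 := mul_le_mul_of_nonneg_left hsum h0
  have hfin : (α/β)*(1-m) + m/β ≤ 1 := by
    rw [div_mul_eq_mul_div, ← add_div, div_le_one hβ0]
    nlinarith
  have hT : (1/(Nt:ℝ)) * ((α/β) * ∑ n, ∑ k, (σ i n k * μs n k * m)/(1 + σ i n k * μs n k * m))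
      = (α/β)*(1-m) := by
    rw [mul_left_comm]
    have : (1/(Nt:ℝ)) * (∑ n, ∑ k, (σ i n k * μs n k * m)/(1 + σ i n k * μs n k * m)) = 1 - m := by
      linarith
    rw [this]
  linarith

include hσ hmbar in
lemma mbar_scale_down (μs : Fin N → Fin K → ℝ) (hμs : ∀ n k, 0 ≤ μs n k) (i : Fin N)
    {α c : ℝ} (hα : 1 ≤ α) (hc : 0 < c) (hc1 : c ≤ 1) (hcm : c ≤ mbar μs i) :
    mbar (fun n k => μs n k / α) i ≤ ((1-c)*α + c) * mbar μs i := by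
  set m := mbar μs i with hmdef
  set β := (1-c)*α + c with hβdef
  have hm : 0 < m := (hmbar μs hμs i).1
  have hm1 : m ≤ 1 := mbar_le_one N K Nt σ hσ mbar hmbar μs hμs i
  have hα0 : (0:ℝ) < α := by linarith
  have hβ1 : 1 ≤ β := by nlinarith
  have hβ0 : 0 < β := by linarith
  have hβα : β ≤ α := by nlinarith
  have hr0 : 0 < β/α := by positivity
  have hr1 : β/α ≤ 1 := (div_le_one hα0).mpr hβα
  have hμα : ∀ n k, 0 ≤ μs n k / α := fun n k => div_nonneg (hμs n k) hα0.le
  refine mbar_le N K Nt σ hσ mbar hmbar _ hμα i (by positivity) ?_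
  have hterm : ∀ n : Fin N, ∀ k : Fin K,
      (β/α) * ((σ i n k * μs n k * m)/(1 + σ i n k * μs n k * m))
        ≤ (σ i n k * (μs n k / α) * (β*m)) / (1 + σ i n k * (μs n k / α) * (β*m)) := by
    intro n k
    have hs : 0 ≤ σ i n k * μs n k * m :=
      mul_nonneg (mul_nonneg (hσ i n k).le (hμs n k)) hm.le
    have hrw : σ i n k * (μs n k / α) * (β*m) = (β/α) * (σ i n k * μs n k * m) := by
      field_simp
    rw [hrw]
    exact frac_down' hr0 hr1 hs
  have hsum : (β/α) * (∑ n, ∑ k, (σ i n k * μs n k * m)/(1 + σ i n k * μs n k * m))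
      ≤ ∑ n, ∑ k, (σ i n k * (μs n k / α) * (β*m)) / (1 + σ i n k * (μs n k / α) * (β*m)) := by
    rw [Finset.mul_sum]
    refine Finset.sum_le_sum fun n _ => ?_
    rw [Finset.mul_sum]
    exact Finset.sum_le_sum fun k _ => hterm n k
  have hfix := Psi_fix N K Nt σ hσ mbar hmbar μs hμs i
  simp only [Psi] at hfix ⊢
  have h0 : (0:ℝ) ≤ 1/(Nt:ℝ) := by positivity
  have h2 := mul_le_mul_of_nonneg_left hsum h0
  have hT : (1/(Nt:ℝ)) * ((β/α) * ∑ n, ∑ k, (σ i n k * μs n k * m)/(1 + σ i n k * μs n k * m))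
      = (β/α)*(1-m) := by
    rw [mul_left_comm]
    have : (1/(Nt:ℝ)) * (∑ n, ∑ k, (σ i n k * μs n k * m)/(1 + σ i n k * μs n k * m)) = 1 - m := by
      linarith
    rw [this]
  have hfin : 1 ≤ (β/α)*(1-m) + β*m := by
    rw [div_mul_eq_mul_div, ← sub_nonneg]
    have : β * (1 - m) / α + β * m - 1 = (β*(1-m) + α*β*m - α)/α := by field_simp
    rw [this]
    apply div_nonneg _ hα0.le
    have e1 : (0:ℝ) ≤ 1 + (α-1)*m := by nlinarith
    have e2 : 0 ≤ (m-c)*(α-1)*(1+(α-1)*m) :=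
      mul_nonneg (mul_nonneg (by linarith) (by linarith)) e1
    have e3 : 0 ≤ (α-1)^2*m*(1-m) :=
      mul_nonneg (mul_nonneg (sq_nonneg _) hm.le) (by linarith)
    nlinarith [e2, e3]
  linarith

end

/-- A positive fixed point of the ROBF map is unique, and the
ROBF iterations converge to it from any positive initial point. -/
theorem robf_fixed_point_convergence
    (N K Nt : ℕ)
    (σ : Fin N → Fin N → Fin K → ℝ) (hσ : ∀ i n k, 0 < σ i n k)
    (γ : Fin N → Fin K → ℝ) (hγ : ∀ i j, 0 < γ i j)
    (mbar : (Fin N → Fin K → ℝ) → Fin N → ℝ)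
    (hmbar : ∀ μ : Fin N → Fin K → ℝ, (∀ n k, 0 ≤ μ n k) → ∀ i : Fin N,
      0 < mbar μ i ∧
      1 / mbar μ i =
        (1 / (Nt : ℝ)) * ∑ n, ∑ k, σ i n k * μ n k / (1 + σ i n k * μ n k * mbar μ i) + 1)
    (F : (Fin N → Fin K → ℝ) → Fin N → Fin K → ℝ)
    (hF : ∀ μ i j, F μ i j = γ i j / (σ i i j * mbar μ i))
    (μstar : Fin N → Fin K → ℝ) (hpos : ∀ i j, 0 < μstar i j)
    (hfix : F μstar = μstar) :
    (∀ μ : Fin N → Fin K → ℝ, (∀ i j, 0 ≤ μ i j) → F μ = μ → μ = μstar) ∧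
    (∀ μ0 : Fin N → Fin K → ℝ, (∀ i j, 0 < μ0 i j) →
      Filter.Tendsto (fun t : ℕ => F^[t] μ0) Filter.atTop (nhds μstar)) := by
  have hμs0 : ∀ n k, 0 ≤ μstar n k := fun n k => (hpos n k).le
  by_cases hN : N = 0
  · subst hN
    constructor
    · intro μ _ _; funext i; exact i.elim0
    · intro μ0 _
      have hall : ∀ t : ℕ, F^[t] μ0 = μstar := fun t => funext fun i => i.elim0
      rw [show (fun t : ℕ => F^[t] μ0) = fun _ => μstar from funext hall]
      exact tendsto_const_nhds
  · have hNpos : 0 < N := Nat.pos_of_ne_zero hN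
    haveI : Nonempty (Fin N) := ⟨⟨0, hNpos⟩⟩
    set c := Finset.univ.inf' Finset.univ_nonempty (fun i => mbar μstar i) with hcdef
    have hc0 : 0 < c := by
      rw [hcdef, Finset.lt_inf'_iff]
      exact fun i _ => (hmbar μstar hμs0 i).1
    have hcle : ∀ i, c ≤ mbar μstar i := fun i => Finset.inf'_le _ (Finset.mem_univ i)
    have hc1 : c ≤ 1 := le_trans (hcle (Classical.arbitrary _))
      (mbar_le_one N K Nt σ hσ mbar hmbar μstar hμs0 _)
    have hfixeq : ∀ i j, γ i j / (σ i i j * mbar μstar i) = μstar i j := by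
      intro i j; rw [← hF]; exact congrFun (congrFun hfix i) j
    have hγeq : ∀ i j, γ i j = μstar i j * (σ i i j * mbar μstar i) := by
      intro i j
      have hp : 0 < σ i i j * mbar μstar i := mul_pos (hσ i i j) (hmbar μstar hμs0 i).1
      rw [← hfixeq i j, div_mul_cancel₀ _ hp.ne']
    -- the key contraction step
    have hstep : ∀ α : ℝ, 1 ≤ α → ∀ μ : Fin N → Fin K → ℝ, (∀ i j, 0 ≤ μ i j) →
        (∀ i j, μstar i j / α ≤ μ i j) → (∀ i j, μ i j ≤ α * μstar i j) →
        (∀ i j, μstar i j / ((1-c)*α + c) ≤ F μ i j) ∧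
        (∀ i j, F μ i j ≤ ((1-c)*α + c) * μstar i j) := by
      intro α hα μ hμ0 hlow hup
      have hα0 : (0:ℝ) < α := by linarith
      have hβ1 : (1:ℝ) ≤ (1-c)*α + c := by nlinarith
      have hβ0 : (0:ℝ) < (1-c)*α + c := by linarith
      constructor
      · intro i j
        have hmμ : 0 < mbar μ i := (hmbar μ hμ0 i).1
        have ha := mbar_mono N K Nt σ hσ mbar hmbar (fun n k => μstar n k / α) μ
          (fun n k => div_nonneg (hμs0 n k) hα0.le) (fun n k => hlow n k) i
        have hb := mbar_scale_down N K Nt σ hσ mbar hmbar μstar hμs0 i hα hc0 hc1 (hcle i)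
        have hmle : mbar μ i ≤ ((1-c)*α + c) * mbar μstar i := le_trans ha hb
        rw [hF, div_le_div_iff₀ hβ0 (mul_pos (hσ i i j) hmμ), hγeq i j]
        have hkey := mul_le_mul_of_nonneg_left hmle
          (mul_nonneg (hμs0 i j) (hσ i i j).le)
        nlinarith [hkey]
      · intro i j
        have hmμ : 0 < mbar μ i := (hmbar μ hμ0 i).1
        have ha := mbar_mono N K Nt σ hσ mbar hmbar μ (fun n k => α * μstar n k)
          hμ0 (fun n k => hup n k) i
        have hb := mbar_scale_up N K Nt σ hσ mbar hmbar μstar hμs0 i hα hc0 hc1 (hcle i)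
        have hmge : mbar μstar i ≤ ((1-c)*α + c) * mbar μ i := by
          rw [div_le_iff₀ hβ0] at hb
          calc mbar μstar i ≤ mbar (fun n k => α * μstar n k) i * ((1-c)*α+c) := hb
          _ ≤ mbar μ i * ((1-c)*α+c) := mul_le_mul_of_nonneg_right ha hβ0.le
          _ = ((1-c)*α+c) * mbar μ i := by ring
        rw [hF, div_le_iff₀ (mul_pos (hσ i i j) hmμ), hγeq i j]
        have hkey := mul_le_mul_of_nonneg_left hmge
          (mul_nonneg (hμs0 i j) (hσ i i j).le)
        nlinarith [hkey]
    -- sandwich along iterates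
    have hiter : ∀ (μ0 : Fin N → Fin K → ℝ), (∀ i j, 0 ≤ μ0 i j) →
        ∀ α₀ : ℝ, 1 ≤ α₀ →
        (∀ i j, μstar i j / α₀ ≤ μ0 i j) → (∀ i j, μ0 i j ≤ α₀ * μstar i j) →
        ∀ t : ℕ, (∀ i j, μstar i j / (1 + (1-c)^t * (α₀ - 1)) ≤ F^[t] μ0 i j) ∧
         (∀ i j, F^[t] μ0 i j ≤ (1 + (1-c)^t * (α₀ - 1)) * μstar i j) := by
      intro μ0 hμ00 α₀ hα₀ hl hu t
      induction t with
      | zero =>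
        constructor <;> intro i j <;>
          simp only [Function.iterate_zero, id_eq, pow_zero, one_mul] <;>
          rw [show (1:ℝ) + (α₀ - 1) = α₀ by ring]
        · exact hl i j
        · exact hu i j
      | succ t ih =>
        have hpw : (0:ℝ) ≤ (1-c)^t := pow_nonneg (by linarith) t
        have hαt : 1 ≤ 1 + (1-c)^t*(α₀-1) := by nlinarith
        have hαtpos : (0:ℝ) < 1 + (1-c)^t*(α₀-1) := by linarith
        have hμt0 : ∀ i j, 0 ≤ F^[t] μ0 i j := fun i j =>
          le_trans (div_nonneg (hμs0 i j) hαtpos.le) (ih.1 i j)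
        have hst := hstep (1 + (1-c)^t*(α₀-1)) hαt (F^[t] μ0) hμt0 ih.1 ih.2
        have hrw : (1-c)*(1 + (1-c)^t*(α₀-1)) + c = 1 + (1-c)^(t+1)*(α₀-1) := by
          rw [pow_succ]; ring
        constructor <;> intro i j
        · rw [Function.iterate_succ_apply', ← hrw]; exact hst.1 i j
        · rw [Function.iterate_succ_apply', ← hrw]; exact hst.2 i j
    -- limits
    have htendα : ∀ α₀ : ℝ, Tendsto (fun t : ℕ => 1 + (1-c)^t*(α₀-1)) atTop (nhds 1) := by
      intro α₀
      have h := tendsto_pow_atTop_nhds_zero_of_lt_one (by linarith : (0:ℝ) ≤ 1-c)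
        (by linarith : (1:ℝ)-c < 1)
      have h2 := (h.mul_const (α₀-1)).const_add 1
      simpa using h2
    have hlimlow : ∀ (α₀ : ℝ) (i : Fin N) (j : Fin K),
        Tendsto (fun t : ℕ => μstar i j / (1 + (1-c)^t*(α₀-1))) atTop (nhds (μstar i j)) := by
      intro α₀ i j
      have := (tendsto_const_nhds (x := μstar i j) (f := atTop)).div (htendα α₀) one_ne_zero
      simpa [Pi.div_def] using this
    have hlimup : ∀ (α₀ : ℝ) (i : Fin N) (j : Fin K),
        Tendsto (fun t : ℕ => (1 + (1-c)^t*(α₀-1)) * μstar i j) atTop (nhds (μstar i j)) := by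
      intro α₀ i j
      have := (htendα α₀).mul_const (μstar i j)
      simpa using this
    -- choice of initial scaling
    have hchoice : ∀ (μ0 : Fin N → Fin K → ℝ), (∀ i j, 0 < μ0 i j) →
        ∃ α₀ : ℝ, 1 ≤ α₀ ∧ (∀ i j, μstar i j / α₀ ≤ μ0 i j) ∧
          (∀ i j, μ0 i j ≤ α₀ * μstar i j) := by
      intro μ0 hμ0
      set A := ∑ i : Fin N, ∑ j : Fin K, (μ0 i j / μstar i j + μstar i j / μ0 i j) with hAdef
      have hterm : ∀ i j, 0 ≤ μ0 i j/μstar i j + μstar i j/μ0 i j := by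
        intro i j
        have := hpos i j; have := hμ0 i j
        positivity
      have hA : 0 ≤ A := Finset.sum_nonneg fun i _ => Finset.sum_nonneg fun j _ => hterm i j
      have hbig : ∀ i j, μ0 i j/μstar i j + μstar i j/μ0 i j ≤ A := by
        intro i j
        calc μ0 i j/μstar i j + μstar i j/μ0 i j
            ≤ ∑ j', (μ0 i j'/μstar i j' + μstar i j'/μ0 i j') :=
              Finset.single_le_sum (fun k _ => hterm i k) (Finset.mem_univ j)
          _ ≤ A := Finset.single_le_sum
              (f := fun i' => ∑ j', (μ0 i' j'/μstar i' j' + μstar i' j'/μ0 i' j'))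
              (fun i' _ => Finset.sum_nonneg fun k _ => hterm i' k) (Finset.mem_univ i)
      refine ⟨1 + A, by linarith, ?_, ?_⟩
      · intro i j
        have h1 : μstar i j / μ0 i j ≤ 1 + A := by
          have h2 : 0 ≤ μ0 i j/μstar i j := div_nonneg (hμ0 i j).le (hpos i j).le
          have := hbig i j; linarith
        rw [div_le_iff₀ (hμ0 i j)] at h1
        rw [div_le_iff₀ (by linarith : (0:ℝ) < 1 + A)]
        linarith [h1]
      · intro i j
        have h1 : μ0 i j / μstar i j ≤ 1 + A := by
          have h2 : 0 ≤ μstar i j/μ0 i j := div_nonneg (hpos i j).le (hμ0 i j).le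
          have := hbig i j; linarith
        rw [div_le_iff₀ (hpos i j)] at h1
        linarith [h1]
    constructor
    · -- uniqueness
      intro μ hμ0 hfixμ
      have hμnn : ∀ n k, 0 ≤ μ n k := hμ0
      have hμpos : ∀ i j, 0 < μ i j := by
        intro i j
        have h := congrFun (congrFun hfixμ i) j
        rw [← h, hF]
        exact div_pos (hγ i j) (mul_pos (hσ i i j) (hmbar μ hμnn i).1)
      obtain ⟨α₀, hα₀, hl, hu⟩ := hchoice μ hμpos
      have hitfix : ∀ t : ℕ, F^[t] μ = μ := fun t => Function.iterate_fixed hfixμ t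
      funext i j
      have hsand := hiter μ hμ0 α₀ hα₀ hl hu
      apply le_antisymm
      · refine ge_of_tendsto (hlimup α₀ i j) (Filter.Eventually.of_forall fun t => ?_)
        have := (hsand t).2 i j
        rwa [hitfix t] at this
      · refine le_of_tendsto (hlimlow α₀ i j) (Filter.Eventually.of_forall fun t => ?_)
        have := (hsand t).1 i j
        rwa [hitfix t] at this
    · -- convergence
      intro μ0 hμ0
      obtain ⟨α₀, hα₀, hl, hu⟩ := hchoice μ0 hμ0
      have hsand := hiter μ0 (fun i j => (hμ0 i j).le) α₀ hα₀ hl hu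
      rw [tendsto_pi_nhds]; intro i
      rw [tendsto_pi_nhds]; intro j
      exact tendsto_of_tendsto_of_tendsto_of_le_of_le (hlimlow α₀ i j) (hlimup α₀ i j)
        (fun t => (hsand t).1 i j) (fun t => (hsand t).2 i j)
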